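/- (Givental') Let ω₁ ≥ ω₂ ≥ … ≥ ω_n be real numbers and let H(p,x) = ½·Σ_{j=1}^n ω_j·(p_j² + x_j²) be the quadratic form on ℝ^{2n} with matrix ℍ' = [[diag(ω),0],[0,diag(ω)]]. Then there exists a Lagrangian subspace Λ ⊆ ℝ^{2n} with zᵀ·ℍ'·z > 0 for every z ∈ Λ, z ≠ 0, if and only if ω_j + ω_{n−j+1} > 0 for every j = 1, …, n. -/

import Mathlib

open Matrix

/-- The standard symplectic matrix `Ω = [[0, I],[−I, 0]]` on `ℝ^{2n}`. -/
noncomputable def Omega (n : ℕ) : Matrix (Fin n ⊕ Fin n) (Fin n ⊕ Fin n) ℝ :=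
  Matrix.fromBlocks 0 1 (-1) 0

/-- The normal-form Hamiltonian matrix `ℍ' = [[diag ω, 0],[0, diag ω]]`,
corresponding to `H(p,x) = ½ Σ ωⱼ (pⱼ² + xⱼ²)`. -/
noncomputable def HNorm {n : ℕ} (ω : Fin n → ℝ) :
    Matrix (Fin n ⊕ Fin n) (Fin n ⊕ Fin n) ℝ :=
  Matrix.fromBlocks (Matrix.diagonal ω) 0 0 (Matrix.diagonal ω)

/-- A subspace of `ℝ^{2n}` is Lagrangian if it has dimension `n` and `Ω` vanishes on it. -/
def IsLagrangian {n : ℕ} (Λ : Submodule ℝ (Fin n ⊕ Fin n → ℝ)) : Prop :=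
  Module.finrank ℝ Λ = n ∧ ∀ u ∈ Λ, ∀ v ∈ Λ, u ⬝ᵥ (Omega n).mulVec v = 0
section GiventalAux

variable {n : ℕ}

lemma omega_mulVec (v : Fin n ⊕ Fin n → ℝ) (k : Fin n ⊕ Fin n) :
    (Omega n).mulVec v k = Sum.elim (fun i => v (Sum.inr i)) (fun i => -(v (Sum.inl i))) k := by
  rw [Omega, fromBlocks_mulVec]
  cases k <;> simp [Matrix.neg_mulVec]

lemma omega_pair (u v : Fin n ⊕ Fin n → ℝ) :
    u ⬝ᵥ (Omega n).mulVec v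
      = ∑ i, (u (Sum.inl i) * v (Sum.inr i) - u (Sum.inr i) * v (Sum.inl i)) := by
  rw [Omega, fromBlocks_mulVec]
  simp [dotProduct, Fintype.sum_sum_type, Matrix.neg_mulVec]
  ring

lemma hnorm_quad (ω : Fin n → ℝ) (z : Fin n ⊕ Fin n → ℝ) :
    z ⬝ᵥ (HNorm ω).mulVec z
      = ∑ i, ω i * (z (Sum.inl i) ^ 2 + z (Sum.inr i) ^ 2) := by
  rw [HNorm, fromBlocks_mulVec]
  simp [dotProduct, Fintype.sum_sum_type, Matrix.mulVec_diagonal, Finset.mul_sum,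
    Finset.sum_add_distrib]
  rw [← Finset.sum_add_distrib]
  apply Finset.sum_congr rfl
  intro i _
  ring

/-- restriction to the first `t` coordinates of each block -/
noncomputable def PMap (t : ℕ) (h : t ≤ n) :
    (Fin n ⊕ Fin n → ℝ) →ₗ[ℝ] (Fin t ⊕ Fin t → ℝ) where
  toFun z := fun k => z (Sum.map (Fin.castLE h) (Fin.castLE h) k)
  map_add' x y := rfl
  map_smul' r x := rfl

lemma pmap_eq_zero {t : ℕ} (h : t ≤ n) {z : Fin n ⊕ Fin n → ℝ}
    (hz : PMap t h z = 0) : ∀ i : Fin n, (i : ℕ) < t →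
      z (Sum.inl i) = 0 ∧ z (Sum.inr i) = 0 := by
  intro i hi
  constructor
  · have := congrFun hz (Sum.inl ⟨(i : ℕ), hi⟩)
    simpa [PMap, Fin.ext_iff] using this
  · have := congrFun hz (Sum.inr ⟨(i : ℕ), hi⟩)
    simpa [PMap, Fin.ext_iff] using this

lemma necessity (hn : 1 ≤ n) (ω : Fin n → ℝ) (hω : ∀ i j : Fin n, i ≤ j → ω j ≤ ω i)
    (Λ : Submodule ℝ (Fin n ⊕ Fin n → ℝ)) (hdim : Module.finrank ℝ Λ = n)
    (hiso : ∀ u ∈ Λ, ∀ v ∈ Λ, u ⬝ᵥ (Omega n).mulVec v = 0)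
    (hpos : ∀ z ∈ Λ, z ≠ 0 → 0 < z ⬝ᵥ (HNorm ω).mulVec z) :
    ∀ j : Fin n, 0 < ω j + ω j.rev := by
  intro j
  by_contra hneg
  push_neg at hneg
  have ha : (j : ℕ) ≤ n := j.isLt.le
  have hb : ((j.rev : Fin n) : ℕ) ≤ n := j.rev.isLt.le
  have hab : (j : ℕ) + ((j.rev : Fin n) : ℕ) = n - 1 := by
    have := Fin.val_rev j
    have := j.isLt
    omega
  -- the key linear map
  let Om : (Fin n ⊕ Fin n → ℝ) →ₗ[ℝ] (Fin n ⊕ Fin n → ℝ) := Matrix.mulVecLin (Omega n)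
  let ι := Λ.subtype
  let ψ₁ : Λ × Λ →ₗ[ℝ] (Fin n ⊕ Fin n → ℝ) :=
    ι.comp (LinearMap.fst ℝ Λ Λ) + Om.comp (ι.comp (LinearMap.snd ℝ Λ Λ))
  let ψ₂ : Λ × Λ →ₗ[ℝ] (Fin n ⊕ Fin n → ℝ) :=
    ι.comp (LinearMap.snd ℝ Λ Λ) + Om.comp (ι.comp (LinearMap.fst ℝ Λ Λ))
  let Φ := LinearMap.prod ((PMap ((j.rev : Fin n) : ℕ) hb).comp ψ₁)
    ((PMap (j : ℕ) ha).comp ψ₂)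
  have hdom : Module.finrank ℝ (Λ × Λ) = 2 * n := by
    rw [Module.finrank_prod, hdim]; ring
  have hcod : Module.finrank ℝ
      ((Fin ((j.rev : Fin n) : ℕ) ⊕ Fin ((j.rev : Fin n) : ℕ) → ℝ) ×
        (Fin (j : ℕ) ⊕ Fin (j : ℕ) → ℝ)) = 2 * (n - 1) := by
    rw [Module.finrank_prod, Module.finrank_pi, Module.finrank_pi]
    simp [Fintype.card_sum]
    omega
  have hrange : Module.finrank ℝ (LinearMap.range Φ) ≤ 2 * (n - 1) :=
    hcod ▸ Submodule.finrank_le _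
  have hker : 0 < Module.finrank ℝ (LinearMap.ker Φ) := by
    have h1 := LinearMap.finrank_range_add_finrank_ker Φ
    rw [hdom] at h1
    omega
  obtain ⟨⟨⟨u, v⟩, hmem⟩, hne⟩ := (Module.finrank_pos_iff_exists_ne_zero (R := ℝ) (M := LinearMap.ker Φ)).mp hker
  -- unpack kernel membership
  rw [LinearMap.mem_ker] at hmem
  have hΦ1 : PMap ((j.rev : Fin n) : ℕ) hb ((u : Fin n ⊕ Fin n → ℝ) + (Omega n).mulVec v) = 0 := by
    have := congrArg Prod.fst hmem
    simpa [Φ, ψ₁, ι, Om] using this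
  have hΦ2 : PMap (j : ℕ) ha ((v : Fin n ⊕ Fin n → ℝ) + (Omega n).mulVec u) = 0 := by
    have := congrArg Prod.snd hmem
    simpa [Φ, ψ₂, ι, Om] using this
  set uf := (u : Fin n ⊕ Fin n → ℝ) with huf
  set vf := (v : Fin n ⊕ Fin n → ℝ) with hvf
  set zf : Fin n ⊕ Fin n → ℝ := uf + (Omega n).mulVec vf with hzf
  set wf : Fin n ⊕ Fin n → ℝ := vf + (Omega n).mulVec uf with hwf
  have hz0 := pmap_eq_zero hb hΦ1
  have hw0 := pmap_eq_zero ha hΦ2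
  -- coordinates
  have zl : ∀ i, zf (Sum.inl i) = uf (Sum.inl i) + vf (Sum.inr i) := by
    intro i; simp [hzf, omega_mulVec]
  have zr : ∀ i, zf (Sum.inr i) = uf (Sum.inr i) - vf (Sum.inl i) := by
    intro i; simp [hzf, omega_mulVec]; ring
  have wl : ∀ i, wf (Sum.inl i) = vf (Sum.inl i) + uf (Sum.inr i) := by
    intro i; simp [hwf, omega_mulVec]
  have wr : ∀ i, wf (Sum.inr i) = vf (Sum.inr i) - uf (Sum.inl i) := by
    intro i; simp [hwf, omega_mulVec]; ring
  -- quadratic form shorthand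
  set Q : (Fin n ⊕ Fin n → ℝ) → ℝ :=
    fun t => ∑ i, ω i * (t (Sum.inl i) ^ 2 + t (Sum.inr i) ^ 2) with hQ
  set N : (Fin n ⊕ Fin n → ℝ) → ℝ :=
    fun t => ∑ i, (t (Sum.inl i) ^ 2 + t (Sum.inr i) ^ 2) with hN
  have hsum : Q zf + Q wf = 2 * Q uf + 2 * Q vf := by
    rw [hQ]
    simp only
    rw [← Finset.sum_add_distrib, Finset.mul_sum, Finset.mul_sum, ← Finset.sum_add_distrib]
    apply Finset.sum_congr rfl
    intro i _
    rw [zl, zr, wl, wr]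
    ring
  have σuv : ∑ i, (uf (Sum.inl i) * vf (Sum.inr i) - uf (Sum.inr i) * vf (Sum.inl i)) = 0 := by
    rw [← omega_pair]
    exact hiso uf u.2 vf v.2
  have hNz : N zf = N uf + N vf := by
    have step : N zf = ∑ i, ((uf (Sum.inl i) ^ 2 + uf (Sum.inr i) ^ 2)
        + (vf (Sum.inl i) ^ 2 + vf (Sum.inr i) ^ 2)
        + 2 * (uf (Sum.inl i) * vf (Sum.inr i) - uf (Sum.inr i) * vf (Sum.inl i))) := by
      rw [hN]
      apply Finset.sum_congr rfl
      intro i _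
      rw [zl, zr]
      ring
    rw [step, Finset.sum_add_distrib, Finset.sum_add_distrib, ← Finset.mul_sum, σuv, hN]
    ring
  have hNw : N wf = N uf + N vf := by
    have step : N wf = ∑ i, ((uf (Sum.inl i) ^ 2 + uf (Sum.inr i) ^ 2)
        + (vf (Sum.inl i) ^ 2 + vf (Sum.inr i) ^ 2)
        + (-2) * (uf (Sum.inl i) * vf (Sum.inr i) - uf (Sum.inr i) * vf (Sum.inl i))) := by
      rw [hN]
      apply Finset.sum_congr rfl
      intro i _
      rw [wl, wr]
      ring
    rw [step, Finset.sum_add_distrib, Finset.sum_add_distrib, ← Finset.mul_sum, σuv, hN]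
    ring
  have hQz : Q zf ≤ ω j.rev * N zf := by
    rw [hQ, hN, Finset.mul_sum]
    apply Finset.sum_le_sum
    intro i _
    rcases lt_or_ge ((i : Fin n) : ℕ) ((j.rev : Fin n) : ℕ) with h | h
    · rw [(hz0 i h).1, (hz0 i h).2]; simp
    · have : ω i ≤ ω j.rev := hω _ _ (by rwa [Fin.le_def])
      exact mul_le_mul_of_nonneg_right this (by positivity)
  have hQw : Q wf ≤ ω j * N wf := by
    rw [hQ, hN, Finset.mul_sum]
    apply Finset.sum_le_sum
    intro i _
    rcases lt_or_ge ((i : Fin n) : ℕ) ((j : Fin n) : ℕ) with h | h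
    · rw [(hw0 i h).1, (hw0 i h).2]; simp
    · have : ω i ≤ ω j := hω _ _ (by rwa [Fin.le_def])
      exact mul_le_mul_of_nonneg_right this (by positivity)
  -- positivity of Q on Λ
  have hQnn : ∀ x : Λ, 0 ≤ Q (x : Fin n ⊕ Fin n → ℝ) := by
    intro x
    rcases eq_or_ne (x : Fin n ⊕ Fin n → ℝ) 0 with h | h
    · rw [h, hQ]; simp
    · have := hpos _ x.2 h
      rw [hnorm_quad] at this
      exact this.le
  have hQstrict : 0 < Q uf + Q vf := by
    have hor : uf ≠ 0 ∨ vf ≠ 0 := by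
      by_contra hcon
      push_neg at hcon
      apply hne
      ext
      · exact congrFun hcon.1 _
      · exact congrFun hcon.2 _
    rcases hor with h | h
    · have := hpos uf u.2 h
      rw [hnorm_quad] at this
      have h2 := hQnn v
      rw [← hvf] at h2
      rw [hQ]; rw [hQ] at h2
      linarith [this]
    · have := hpos vf v.2 h
      rw [hnorm_quad] at this
      have h2 := hQnn u
      rw [← huf] at h2
      rw [hQ]; rw [hQ] at h2
      linarith [this]
  have hNnn : 0 ≤ N zf := by
    rw [hN]
    apply Finset.sum_nonneg
    intro i _
    positivity
  have hQw' : Q wf ≤ ω j * N zf := by rw [hNz, ← hNw]; exact hQw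
  have hfinal : (ω j + ω j.rev) * N zf ≤ 0 := mul_nonpos_of_nonpos_of_nonneg hneg hNnn
  have h4 : ω j * N zf + ω j.rev * N zf = (ω j + ω j.rev) * N zf := by ring
  linarith [hQz, hQw', hsum, hQstrict, hfinal, h4]


/-- The graph map `c ↦ (c, c ∘ rev)` -/
noncomputable def GMap (n : ℕ) : (Fin n → ℝ) →ₗ[ℝ] (Fin n ⊕ Fin n → ℝ) where
  toFun c := Sum.elim c (fun i => c i.rev)
  map_add' c d := by funext k; cases k <;> simp
  map_smul' r c := by funext k; cases k <;> simp

lemma gmap_inj : Function.Injective (GMap n) := by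
  intro c d h
  funext i
  have := congrFun h (Sum.inl i)
  simpa [GMap] using this

lemma sufficiency (ω : Fin n → ℝ) (h : ∀ j : Fin n, 0 < ω j + ω j.rev) :
    ∃ Λ : Submodule ℝ (Fin n ⊕ Fin n → ℝ), IsLagrangian Λ ∧
        ∀ z ∈ Λ, z ≠ 0 → 0 < z ⬝ᵥ (HNorm ω).mulVec z := by
  refine ⟨LinearMap.range (GMap n), ⟨?_, ?_⟩, ?_⟩
  · rw [LinearMap.finrank_range_of_inj gmap_inj]
    simp [Module.finrank_pi]
  · rintro u ⟨c, rfl⟩ v ⟨d, rfl⟩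
    rw [omega_pair]
    simp only [GMap, LinearMap.coe_mk, AddHom.coe_mk, Sum.elim_inl, Sum.elim_inr]
    rw [Finset.sum_sub_distrib, sub_eq_zero]
    rw [← Equiv.sum_comp (Fin.revPerm) (fun i => c i.rev * d i)]
    simp [Fin.rev_rev]
  · rintro z ⟨c, rfl⟩ hz
    have hc : c ≠ 0 := by rintro rfl; exact hz (map_zero _)
    rw [hnorm_quad]
    simp only [GMap, LinearMap.coe_mk, AddHom.coe_mk, Sum.elim_inl, Sum.elim_inr]
    have key : ∑ i, ω i * (c i ^ 2 + c i.rev ^ 2) = ∑ i, (ω i + ω i.rev) * c i ^ 2 := by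
      have h2 : ∑ i, ω i * c i.rev ^ 2 = ∑ i, ω i.rev * c i ^ 2 := by
        rw [← Equiv.sum_comp (Fin.revPerm) (fun i => ω i.rev * c i ^ 2)]
        simp [Fin.rev_rev]
      calc ∑ i, ω i * (c i ^ 2 + c i.rev ^ 2)
          = ∑ i, (ω i * c i ^ 2) + ∑ i, (ω i * c i.rev ^ 2) := by
            rw [← Finset.sum_add_distrib]; apply Finset.sum_congr rfl; intros; ring
        _ = ∑ i, (ω i + ω i.rev) * c i ^ 2 := by
            rw [h2, ← Finset.sum_add_distrib]; apply Finset.sum_congr rfl; intros; ring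
    rw [key]
    obtain ⟨i0, hi0⟩ := Function.ne_iff.mp hc
    apply Finset.sum_pos' (fun i _ => mul_nonneg (h i).le (sq_nonneg _))
    exact ⟨i0, Finset.mem_univ _, mul_pos (h i0) (sq_pos_of_ne_zero hi0)⟩

end GiventalAux

theorem givental_positive_lagrangian_iff {n : ℕ} (hn : 1 ≤ n)
    (ω : Fin n → ℝ) (hω : ∀ i j : Fin n, i ≤ j → ω j ≤ ω i) :
    (∃ Λ : Submodule ℝ (Fin n ⊕ Fin n → ℝ), IsLagrangian Λ ∧
        ∀ z ∈ Λ, z ≠ 0 → 0 < z ⬝ᵥ (HNorm ω).mulVec z) ↔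
      ∀ j : Fin n, 0 < ω j + ω j.rev := by
  constructor
  · rintro ⟨Λ, ⟨hdim, hiso⟩, hpos⟩
    exact necessity hn ω hω Λ hdim hiso hpos
  · exact sufficiency ω
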